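/- For any real symmetric trace-free 3×3 matrix M, -4·det(M) ≤ (2/9)·√6·|M|³, where |M| denotes the Frobenius (Euclidean) norm of M. -/

import Mathlib

open Matrix

/-- Frobenius norm of a 3×3 real matrix. -/
noncomputable def frob (M : Matrix (Fin 3) (Fin 3) ℝ) : ℝ :=
  Real.sqrt (∑ i, ∑ j, (M i j) ^ 2)

/-- For any real symmetric trace-free 3×3 matrix `M`,
`-4 det M ≤ (2/9)·√6·|M|³` with `|M|` the Frobenius norm. -/
theorem neg_four_det_le (M : Matrix (Fin 3) (Fin 3) ℝ)
    (hsym : M.IsSymm) (htr : M.trace = 0) :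
    -4 * M.det ≤ (2 / 9) * Real.sqrt 6 * (frob M) ^ 3 := by
  simp only [frob]
  have hM : M.IsHermitian := by
    rw [Matrix.IsHermitian, conjTranspose]; simp [Matrix.IsSymm] at hsym ⊢; exact hsym
  set U : Matrix (Fin 3) (Fin 3) ℝ := (hM.eigenvectorUnitary : Matrix (Fin 3) (Fin 3) ℝ)
  set D : Matrix (Fin 3) (Fin 3) ℝ := diagonal (RCLike.ofReal ∘ hM.eigenvalues)
  have hspec : M = U * D * star U := hM.spectral_theorem
  have hU : star U * U = 1 := (Matrix.mem_unitaryGroup_iff').mp hM.eigenvectorUnitary.2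
  set x := hM.eigenvalues 0
  set y := hM.eigenvalues 1
  set z := hM.eigenvalues 2
  have htr1 : x + y + z = 0 := by
    have h1 : M.trace = D.trace := by
      rw [hspec, Matrix.trace_mul_cycle, hU, Matrix.one_mul]
    rw [h1] at htr
    simpa [D, Matrix.trace_diagonal, Fin.sum_univ_three] using htr
  have htr2 : (M * M).trace = x ^ 2 + y ^ 2 + z ^ 2 := by
    have h2 : M * M = U * (D * D) * star U := by
      rw [hspec]
      rw [show U * D * star U * (U * D * star U) = U * D * (star U * U) * D * star U by
        noncomm_ring]
      rw [hU]; noncomm_ring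
    rw [h2, Matrix.trace_mul_cycle, hU, Matrix.one_mul]
    simp [D, Matrix.diagonal_mul_diagonal, Matrix.trace_diagonal, Fin.sum_univ_three, sq]
    rfl
  have hfrob : (∑ i, ∑ j, (M i j) ^ 2) = x ^ 2 + y ^ 2 + z ^ 2 := by
    rw [← htr2]
    have hsy : ∀ i j, M j i = M i j := fun i j => by
      conv_lhs => rw [← hsym]
      rfl
    simp only [Matrix.trace, Matrix.diag, Matrix.mul_apply]
    rw [Finset.sum_comm]
    exact Finset.sum_congr rfl fun i _ => Finset.sum_congr rfl fun j _ => by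
      rw [hsy i j]; ring
  have hdet : M.det = x * y * z := by
    have := hM.det_eq_prod_eigenvalues
    simpa [Fin.prod_univ_three] using this
  -- now a pure scalar inequality
  rw [hdet, hfrob]
  set s : ℝ := x ^ 2 + y ^ 2 + z ^ 2 with hs
  have hs0 : 0 ≤ s := by positivity
  have hrhs : 0 ≤ (2 / 9) * Real.sqrt 6 * (Real.sqrt s) ^ 3 := by positivity
  rcases le_or_gt 0 (x * y * z) with h | h
  · nlinarith [hrhs]
  · have hL : 0 ≤ -4 * (x * y * z) := by nlinarith
    have key : (-4 * (x * y * z)) ^ 2 ≤ ((2 / 9) * Real.sqrt 6 * (Real.sqrt s) ^ 3) ^ 2 := by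
      have h6 : (Real.sqrt 6) ^ 2 = 6 := Real.sq_sqrt (by norm_num)
      have hss : (Real.sqrt s) ^ 2 = s := Real.sq_sqrt hs0
      have hz : z = -x - y := by linarith
      have expand : ((2 / 9) * Real.sqrt 6 * (Real.sqrt s) ^ 3) ^ 2 = (8 / 27) * s ^ 3 := by
        have : ((Real.sqrt s) ^ 3) ^ 2 = ((Real.sqrt s) ^ 2) ^ 3 := by ring
        rw [mul_pow, mul_pow, h6, this, hss]; ring
      rw [expand, hs, hz]
      nlinarith [sq_nonneg (x-y), sq_nonneg (x+2*y), sq_nonneg (2*x+y), sq_nonneg (x*y),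
        sq_nonneg ((x-y)*(x+2*y)*(2*x+y)), sq_nonneg (x^2+x*y+y^2), sq_nonneg (x^2-y^2)]
    calc -4 * (x * y * z) = Real.sqrt ((-4 * (x * y * z)) ^ 2) := (Real.sqrt_sq hL).symm
      _ ≤ Real.sqrt (((2 / 9) * Real.sqrt 6 * (Real.sqrt s) ^ 3) ^ 2) := Real.sqrt_le_sqrt key
      _ = (2 / 9) * Real.sqrt 6 * (Real.sqrt s) ^ 3 := Real.sqrt_sq hrhs
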